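/- Let Φ : ℝ → ℝ be convex, let z ∈ ℝ, assume Φ is differentiable at z, and assume s ↦ exp(−Φ(s)) is integrable on (z, ∞). Then exp(−Φ(z)) − Φ'(z) · ∫_{(z,∞)} exp(−Φ(s)) ds ≥ 0. -/

import Mathlib

open MeasureTheory

/-- For convex `Φ` differentiable at `z`,
`exp(−Φ(z)) − Φ'(z) · ∫_{(z,∞)} exp(−Φ(s)) ds ≥ 0`. -/
theorem stmt_6 (Φ : ℝ → ℝ) (hΦ : ConvexOn ℝ Set.univ Φ)
    (z d : ℝ) (hd : HasDerivAt Φ d z)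
    (hint : IntegrableOn (fun s => Real.exp (-Φ s)) (Set.Ioi z)) :
    0 ≤ Real.exp (-Φ z) - d * ∫ s in Set.Ioi z, Real.exp (-Φ s) := by
  have hInonneg : 0 ≤ ∫ s in Set.Ioi z, Real.exp (-Φ s) :=
    integral_nonneg fun s => (Real.exp_pos _).le
  rcases le_or_gt d 0 with hd0 | hd0
  · have : d * ∫ s in Set.Ioi z, Real.exp (-Φ s) ≤ 0 :=
      mul_nonpos_of_nonpos_of_nonneg hd0 hInonneg
    have := Real.exp_pos (-Φ z)
    linarith
  · -- tangent line bound: for s > z, Φ s ≥ Φ z + d * (s - z)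
    have tangent : ∀ s ∈ Set.Ioi z, Real.exp (-Φ s) ≤
        Real.exp (-Φ z) * Real.exp (-(d * (s - z))) := by
      intro s hs
      rw [Set.mem_Ioi] at hs
      have hslope := hΦ.le_slope_of_hasDerivAt (Set.mem_univ z) (Set.mem_univ s) hs hd
      rw [slope_def_field] at hslope
      have hΦs : Φ z + d * (s - z) ≤ Φ s := by
        have hpos : 0 < s - z := by linarith
        rw [le_div_iff₀ hpos] at hslope
        linarith
      rw [← Real.exp_add]
      exact Real.exp_le_exp.mpr (by linarith)
    -- the dominating function is integrable
    have hgint : IntegrableOn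
        (fun s => Real.exp (-Φ z) * Real.exp (-(d * (s - z)))) (Set.Ioi z) := by
      have hbase : IntegrableOn (fun s : ℝ => Real.exp (-d * s)) (Set.Ioi z) :=
        exp_neg_integrableOn_Ioi z hd0
      have h2 : IntegrableOn
          (fun s : ℝ => Real.exp (-Φ z) * (Real.exp (d * z) * Real.exp (-d * s)))
          (Set.Ioi z) := ((hbase.const_mul _).const_mul _ : _)
      refine h2.congr_fun (fun s _ => ?_) measurableSet_Ioi
      simp only [← Real.exp_add]
      congr 1
      ring
    -- compare integrals
    have hmono : (∫ s in Set.Ioi z, Real.exp (-Φ s)) ≤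
        ∫ s in Set.Ioi z, Real.exp (-Φ z) * Real.exp (-(d * (s - z))) :=
      setIntegral_mono_on hint hgint measurableSet_Ioi tangent
    -- compute the dominating integral
    have hcalc : (∫ s in Set.Ioi z, Real.exp (-Φ z) * Real.exp (-(d * (s - z))))
        = Real.exp (-Φ z) / d := by
      rw [integral_const_mul]
      have h1 : (∫ s in Set.Ioi z, Real.exp (-(d * (s - z))))
          = ∫ s in Set.Ioi z, Real.exp (d * z) * Real.exp (-(d * s)) := by
        apply setIntegral_congr_fun measurableSet_Ioi
        intro s _
        simp only [← Real.exp_add]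
        congr 1
        ring
      rw [h1, integral_const_mul]
      have h2 : (∫ s in Set.Ioi z, Real.exp (-(d * s)))
          = d⁻¹ • ∫ x in Set.Ioi (d * z), Real.exp (-x) :=
        integral_comp_mul_left_Ioi (fun x => Real.exp (-x)) z hd0
      rw [h2, integral_exp_neg_Ioi, smul_eq_mul]
      have hee : Real.exp (d * z) * Real.exp (-(d * z)) = 1 := by
        rw [← Real.exp_add]; simp
      rw [div_eq_mul_inv]
      linear_combination Real.exp (-Φ z) * d⁻¹ * hee
    have : d * ∫ s in Set.Ioi z, Real.exp (-Φ s) ≤ Real.exp (-Φ z) := by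
      calc d * ∫ s in Set.Ioi z, Real.exp (-Φ s)
          ≤ d * (Real.exp (-Φ z) / d) := by
            rw [← hcalc]; exact mul_le_mul_of_nonneg_left hmono hd0.le
        _ = Real.exp (-Φ z) := by field_simp
    linarith
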